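/- For any feasible policy π of a finite-horizon MDP and any martingale-difference penalty, the expected penalized value of π equals its unpenalized expected value; hence the hindsight maximum of penalized values dominates the value of every feasible policy. -/

import Mathlib

noncomputable section
open Finset
open scoped Classical

/-- State trajectory induced by a deterministic transition function, an initial state,
and a sequence of actions. -/
def traj {S A : Type} (f : S → A → S) (x0 : S) (σ : ℕ → A) : ℕ → S
  | 0 => x0
  | n + 1 => f (traj f x0 σ n) (σ n)

lemma traj_congr {S A : Type} (f : S → A → S) (x0 : S) (σ σ' : ℕ → A) :
    ∀ n, (∀ j < n, σ j = σ' j) → traj f x0 σ n = traj f x0 σ' n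
  | 0, _ => rfl
  | n + 1, h => by
    simp only [traj]
    rw [traj_congr f x0 σ σ' n (fun j hj => h j (Nat.lt_succ_of_lt hj)),
      h n (Nat.lt_succ_self n)]

/-- Key lemma: the expected value of the stage-`i` penalty along a nonanticipative policy
is zero. -/
lemma pen_expect_zero
    (Ω : Type) [Fintype Ω] (P : Ω → ℝ)
    (Z : Type) (ξ : ℕ → Ω → Z)
    (S A : Type) (f : S → A → S) (x0 : S)
    (pen : ℕ → S → A → Ω → ℝ)
    (hmart : ∀ (i : ℕ) (x : S) (a : A) (ω : Ω),
      ∑ ω' ∈ Finset.univ.filter (fun ω' => ∀ j ≤ i, ξ j ω' = ξ j ω), P ω' * pen i x a ω' = 0)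
    (π : ℕ → Ω → A)
    (hπ : ∀ (i : ℕ) (ω ω' : Ω), (∀ j ≤ i, ξ j ω = ξ j ω') → π i ω = π i ω')
    (i : ℕ) :
    ∑ ω, P ω * pen i (traj f x0 (fun n => π n ω) i) (π i ω) ω = 0 := by
  classical
  set g : Ω → (Fin (i + 1) → Z) := fun ω j => ξ j ω with hg
  have hmaps : ∀ ω ∈ (Finset.univ : Finset Ω), g ω ∈ Finset.univ.image g :=
    fun ω _ => Finset.mem_image_of_mem g (Finset.mem_univ ω)
  rw [← Finset.sum_fiberwise_of_maps_to hmaps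
    (fun ω => P ω * pen i (traj f x0 (fun n => π n ω) i) (π i ω) ω)]
  refine Finset.sum_eq_zero fun c hc => ?_
  obtain ⟨ω₀, _, rfl⟩ := Finset.mem_image.mp hc
  have hfilter : (Finset.univ.filter fun ω => g ω = g ω₀)
      = Finset.univ.filter (fun ω' => ∀ j ≤ i, ξ j ω' = ξ j ω₀) := by
    apply Finset.filter_congr
    intro ω _
    simp only [hg, funext_iff, eq_iff_iff]
    constructor
    · intro h j hj
      exact h ⟨j, Nat.lt_succ_of_le hj⟩
    · intro h j
      exact h j (Nat.lt_succ_iff.mp j.2)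
  rw [hfilter]
  have hconst : ∀ ω ∈ Finset.univ.filter (fun ω' => ∀ j ≤ i, ξ j ω' = ξ j ω₀),
      P ω * pen i (traj f x0 (fun n => π n ω) i) (π i ω) ω
        = P ω * pen i (traj f x0 (fun n => π n ω₀) i) (π i ω₀) ω := by
    intro ω hω
    have hω' := (Finset.mem_filter.mp hω).2
    have hπeq : ∀ j ≤ i, π j ω = π j ω₀ := fun j hj =>
      hπ j ω ω₀ (fun k hk => hω' k (hk.trans hj))
    rw [traj_congr f x0 (fun n => π n ω) (fun n => π n ω₀) i
      (fun j hj => hπeq j (Nat.le_of_lt hj)), hπeq i le_rfl]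
  rw [Finset.sum_congr rfl hconst]
  exact hmart i (traj f x0 (fun n => π n ω₀) i) (π i ω₀) ω₀

/-- For any nonanticipative policy `π` of a finite-horizon MDP and any martingale-difference
penalty, the expected penalized value of `π` equals its unpenalized expected value; hence the
expected hindsight maximum of penalized values dominates the value of every feasible policy. -/
theorem penalized_policy_value_invariance
    (Ω : Type) [Fintype Ω] (P : Ω → ℝ) (hP0 : ∀ ω, 0 ≤ P ω) (hP1 : ∑ ω, P ω = 1)
    (Z : Type) (ξ : ℕ → Ω → Z)
    (S A : Type) [Fintype A] [Nonempty A] (f : S → A → S) (x0 : S)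
    (r : ℕ → S → A → Z → ℝ) (δ : ℝ) (hδ0 : 0 < δ) (hδ1 : δ ≤ 1) (I : ℕ) (hI : 0 < I)
    (pen : ℕ → S → A → Ω → ℝ)
    (hmart : ∀ (i : ℕ) (x : S) (a : A) (ω : Ω),
      ∑ ω' ∈ Finset.univ.filter (fun ω' => ∀ j ≤ i, ξ j ω' = ξ j ω), P ω' * pen i x a ω' = 0) :
    (∀ π : ℕ → Ω → A,
      (∀ (i : ℕ) (ω ω' : Ω), (∀ j ≤ i, ξ j ω = ξ j ω') → π i ω = π i ω') →
      ∑ ω, P ω * ∑ i ∈ Finset.range I, δ ^ i *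
          (r i (traj f x0 (fun n => π n ω) i) (π i ω) (ξ i ω) -
            δ * pen i (traj f x0 (fun n => π n ω) i) (π i ω) ω)
        = ∑ ω, P ω * ∑ i ∈ Finset.range I, δ ^ i *
            r i (traj f x0 (fun n => π n ω) i) (π i ω) (ξ i ω)) ∧
    (⨆ π : {π : ℕ → Ω → A //
        ∀ (i : ℕ) (ω ω' : Ω), (∀ j ≤ i, ξ j ω = ξ j ω') → π i ω = π i ω'},
      ∑ ω, P ω * ∑ i ∈ Finset.range I,
        δ ^ i * r i (traj f x0 (fun n => π.1 n ω) i) (π.1 i ω) (ξ i ω)) ≤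
      ∑ ω, P ω * sSup {v : ℝ | ∃ σ : ℕ → A,
        v = ∑ i ∈ Finset.range I, δ ^ i *
          (r i (traj f x0 σ i) (σ i) (ξ i ω) - δ * pen i (traj f x0 σ i) (σ i) ω)} := by
  classical
  have part1 : ∀ π : ℕ → Ω → A,
      (∀ (i : ℕ) (ω ω' : Ω), (∀ j ≤ i, ξ j ω = ξ j ω') → π i ω = π i ω') →
      ∑ ω, P ω * ∑ i ∈ Finset.range I, δ ^ i *
          (r i (traj f x0 (fun n => π n ω) i) (π i ω) (ξ i ω) -
            δ * pen i (traj f x0 (fun n => π n ω) i) (π i ω) ω)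
        = ∑ ω, P ω * ∑ i ∈ Finset.range I, δ ^ i *
            r i (traj f x0 (fun n => π n ω) i) (π i ω) (ξ i ω) := by
    intro π hπ
    have expand : ∀ ω, P ω * ∑ i ∈ Finset.range I, δ ^ i *
          (r i (traj f x0 (fun n => π n ω) i) (π i ω) (ξ i ω) -
            δ * pen i (traj f x0 (fun n => π n ω) i) (π i ω) ω)
        = P ω * ∑ i ∈ Finset.range I, δ ^ i *
            r i (traj f x0 (fun n => π n ω) i) (π i ω) (ξ i ω)
          - ∑ i ∈ Finset.range I, δ ^ i * δ *
            (P ω * pen i (traj f x0 (fun n => π n ω) i) (π i ω) ω) := by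
      intro ω
      rw [Finset.mul_sum, Finset.mul_sum, ← Finset.sum_sub_distrib]
      apply Finset.sum_congr rfl
      intro i _
      ring
    calc ∑ ω, P ω * ∑ i ∈ Finset.range I, δ ^ i *
          (r i (traj f x0 (fun n => π n ω) i) (π i ω) (ξ i ω) -
            δ * pen i (traj f x0 (fun n => π n ω) i) (π i ω) ω)
        = ∑ ω, (P ω * ∑ i ∈ Finset.range I, δ ^ i *
            r i (traj f x0 (fun n => π n ω) i) (π i ω) (ξ i ω)
          - ∑ i ∈ Finset.range I, δ ^ i * δ *
            (P ω * pen i (traj f x0 (fun n => π n ω) i) (π i ω) ω)) :=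
          Finset.sum_congr rfl fun ω _ => expand ω
      _ = ∑ ω, P ω * ∑ i ∈ Finset.range I, δ ^ i *
            r i (traj f x0 (fun n => π n ω) i) (π i ω) (ξ i ω)
          - ∑ ω, ∑ i ∈ Finset.range I, δ ^ i * δ *
            (P ω * pen i (traj f x0 (fun n => π n ω) i) (π i ω) ω) :=
          Finset.sum_sub_distrib _ _
      _ = _ := by
          have : ∑ ω, ∑ i ∈ Finset.range I, δ ^ i * δ *
              (P ω * pen i (traj f x0 (fun n => π n ω) i) (π i ω) ω) = 0 := by
            rw [Finset.sum_comm]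
            apply Finset.sum_eq_zero
            intro i _
            rw [← Finset.mul_sum,
              pen_expect_zero Ω P Z ξ S A f x0 pen hmart π hπ i, mul_zero]
          rw [this, sub_zero]
  refine ⟨part1, ?_⟩
  -- Part 2
  have hnonempty : Nonempty {π : ℕ → Ω → A //
      ∀ (i : ℕ) (ω ω' : Ω), (∀ j ≤ i, ξ j ω = ξ j ω') → π i ω = π i ω'} :=
    ⟨⟨fun _ _ => Classical.arbitrary A, fun _ _ _ _ => rfl⟩⟩
  apply ciSup_le
  intro π
  rw [← part1 π.1 π.2]
  apply Finset.sum_le_sum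
  intro ω _
  apply mul_le_mul_of_nonneg_left _ (hP0 ω)
  -- the value of σ := π · ω is in the set; need BddAbove
  set F : (ℕ → A) → ℝ := fun σ => ∑ i ∈ Finset.range I, δ ^ i *
      (r i (traj f x0 σ i) (σ i) (ξ i ω) - δ * pen i (traj f x0 σ i) (σ i) ω) with hF
  have hFdep : ∀ σ : ℕ → A, F σ
      = F (fun n => if h : n < I then σ n else Classical.arbitrary A) := by
    intro σ
    apply Finset.sum_congr rfl
    intro i hi
    have hiI : i < I := Finset.mem_range.mp hi
    have htraj : traj f x0 σ i
        = traj f x0 (fun n => if h : n < I then σ n else Classical.arbitrary A) i := by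
      apply traj_congr
      intro j hj
      rw [dif_pos (hj.trans hiI)]
    rw [htraj]
    simp only [dif_pos hiI]
  have hbdd : BddAbove {v : ℝ | ∃ σ : ℕ → A, v = F σ} := by
    have hsub : {v : ℝ | ∃ σ : ℕ → A, v = F σ} ⊆
        Set.range (fun τ : Fin I → A =>
          F (fun n => if h : n < I then τ ⟨n, h⟩ else Classical.arbitrary A)) := by
      rintro v ⟨σ, rfl⟩
      refine ⟨fun j => σ j.1, ?_⟩
      simp only
      rw [hFdep σ]
    exact (Set.Finite.subset (Set.finite_range _) hsub).bddAbove
  exact le_csSup hbdd ⟨fun n => π.1 n ω, rfl⟩
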